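/- Let u^ε be minimizers of the penalized functional J_ε(u) = Σ_i ‖∇u_i‖² + (1/ε) Σ_{i≠j} Σ_x u_i(x)² u_j(x)² over {u : u_i = φ_i on Γ} on a finite connected graph. Then for any sequence ε_n → 0 there is a subsequence along which u^{ε_n} converges (pointwise on X) to a minimizer of the constrained segregated problem min Σ_i ‖∇u_i‖² subject to u_i = φ_i on Γ, u_i ≥ 0, u_i u_j = 0 pointwise. -/

import Mathlib

open Finset

noncomputable def lap {X : Type*} [Fintype X] (w : X → X → ℝ) (u : X → ℝ) (x : X) : ℝ :=
  ∑ y, w x y * (u x - u y)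

noncomputable def dEnergy {X : Type*} [Fintype X] (w : X → X → ℝ) (u : X → ℝ) : ℝ :=
  (1 / 2) * ∑ x, ∑ y, w x y * (u x - u y) ^ 2

def Adm {X : Type*} {k : ℕ} (Γ : Set X) (φ : Fin k → X → ℝ) (u : Fin k → X → ℝ) : Prop :=
  (∀ i, ∀ x ∈ Γ, u i x = φ i x) ∧ (∀ i x, 0 ≤ u i x) ∧
    (∀ i j, i ≠ j → ∀ x, u i x * u j x = 0)

noncomputable def Jpen {X : Type*} [Fintype X] (w : X → X → ℝ) (ε : ℝ) {k : ℕ}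
    (u : Fin k → X → ℝ) : ℝ :=
  ∑ i, dEnergy w (u i) +
    (1 / ε) * ∑ i, ∑ j ∈ Finset.univ.erase i, ∑ x, (u i x) ^ 2 * (u j x) ^ 2

section Aux

variable {X : Type*} [Fintype X]

noncomputable def penTerm {X : Type*} [Fintype X] {k : ℕ} (u : Fin k → X → ℝ) : ℝ :=
  ∑ i, ∑ j ∈ Finset.univ.erase i, ∑ x, (u i x) ^ 2 * (u j x) ^ 2

lemma Jpen_eq (w : X → X → ℝ) (ε : ℝ) {k : ℕ} (u : Fin k → X → ℝ) :
    Jpen w ε u = ∑ i, dEnergy w (u i) + (1 / ε) * penTerm u := rfl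

lemma dEnergy_nonneg (w : X → X → ℝ) (hnn : ∀ x y, 0 ≤ w x y) (u : X → ℝ) :
    0 ≤ dEnergy w u := by
  unfold dEnergy
  apply mul_nonneg (by norm_num)
  exact Finset.sum_nonneg fun x _ => Finset.sum_nonneg fun y _ =>
    mul_nonneg (hnn _ _) (sq_nonneg _)

lemma penTerm_nonneg {k : ℕ} (u : Fin k → X → ℝ) : 0 ≤ penTerm u := by
  apply Finset.sum_nonneg; intro i _
  apply Finset.sum_nonneg; intro j _
  apply Finset.sum_nonneg; intro x _
  positivity

lemma penTerm_eq_zero_of_seg {k : ℕ} (u : Fin k → X → ℝ)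
    (h : ∀ i j, i ≠ j → ∀ x, u i x * u j x = 0) : penTerm u = 0 := by
  apply Finset.sum_eq_zero; intro i _
  apply Finset.sum_eq_zero; intro j hj
  apply Finset.sum_eq_zero; intro x _
  have hij := h i j (Ne.symm (Finset.mem_erase.mp hj).1) x
  calc (u i x) ^ 2 * (u j x) ^ 2 = (u i x * u j x) ^ 2 := (mul_pow _ _ 2).symm
  _ = 0 := by rw [hij]; ring

lemma edge_le (w : X → X → ℝ) (hnn : ∀ x y, 0 ≤ w x y) (u : X → ℝ) (a b : X) :
    w a b * (u a - u b) ^ 2 ≤ 2 * dEnergy w u := by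
  have h : ∀ x ∈ (univ : Finset X), (0:ℝ) ≤ ∑ y, w x y * (u x - u y) ^ 2 :=
    fun x _ => Finset.sum_nonneg fun y _ => mul_nonneg (hnn _ _) (sq_nonneg _)
  have h1 : w a b * (u a - u b) ^ 2 ≤ ∑ y, w a y * (u a - u y) ^ 2 :=
    Finset.single_le_sum (f := fun y => w a y * (u a - u y) ^ 2)
      (fun y _ => mul_nonneg (hnn _ _) (sq_nonneg _)) (mem_univ b)
  have h2 : (∑ y, w a y * (u a - u y) ^ 2) ≤ ∑ x, ∑ y, w x y * (u x - u y) ^ 2 :=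
    Finset.single_le_sum h (mem_univ a)
  unfold dEnergy; linarith

lemma sq_posPart_sub_le (a b : ℝ) : (max a 0 - max b 0) ^ 2 ≤ (a - b) ^ 2 := by
  rcases le_total a 0 with ha | ha <;> rcases le_total b 0 with hb | hb
  · rw [max_eq_right ha, max_eq_right hb]; nlinarith
  · rw [max_eq_right ha, max_eq_left hb]; nlinarith
  · rw [max_eq_left ha, max_eq_right hb]; nlinarith
  · rw [max_eq_left ha, max_eq_left hb]

lemma sq_posPart_le (a : ℝ) : (max a 0) ^ 2 ≤ a ^ 2 := by
  rcases le_total a 0 with ha | ha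
  · rw [max_eq_right ha]; nlinarith
  · rw [max_eq_left ha]

lemma chain_abs_bound {X : Type*} (r : X → X → Prop) (u : X → ℝ) (K : ℝ)
    (h : ∀ p q, r p q → |u p - u q| ≤ K) :
    ∀ (l : List X) (a : X), List.Chain r a l →
      |u a - u ((a :: l).getLast (List.cons_ne_nil a l))| ≤ K * l.length := by
  intro l
  induction l with
  | nil => intro a _; simp
  | cons b t ih =>
    intro a hc
    simp only [List.Chain, List.isChain_cons_cons] at hc
    have h1 := h a b hc.1
    have h2 := ih b hc.2
    rw [List.getLast_cons (List.cons_ne_nil b t)]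
    calc |u a - u ((b :: t).getLast (List.cons_ne_nil b t))|
        ≤ |u a - u b| + |u b - u ((b :: t).getLast (List.cons_ne_nil b t))| := abs_sub_le _ _ _
    _ ≤ K + K * t.length := add_le_add h1 h2
    _ = K * (b :: t).length := by simp [List.length_cons]; ring

lemma tendsto_dEnergySum {k : ℕ} (w : X → X → ℝ) (f : ℕ → Fin k → X → ℝ) (g : Fin k → X → ℝ)
    (h : ∀ i y, Filter.Tendsto (fun n => f n i y) Filter.atTop (nhds (g i y))) :
    Filter.Tendsto (fun n => ∑ i, dEnergy w (f n i)) Filter.atTop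
      (nhds (∑ i, dEnergy w (g i))) := by
  apply tendsto_finset_sum; intro i _
  unfold dEnergy
  apply Filter.Tendsto.const_mul
  apply tendsto_finset_sum; intro x _
  apply tendsto_finset_sum; intro y _
  exact tendsto_const_nhds.mul (((h i x).sub (h i y)).pow 2)

lemma tendsto_penTerm {k : ℕ} (f : ℕ → Fin k → X → ℝ) (g : Fin k → X → ℝ)
    (h : ∀ i y, Filter.Tendsto (fun n => f n i y) Filter.atTop (nhds (g i y))) :
    Filter.Tendsto (fun n => penTerm (f n)) Filter.atTop (nhds (penTerm g)) := by
  apply tendsto_finset_sum; intro i _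
  apply tendsto_finset_sum; intro j _
  apply tendsto_finset_sum; intro x _
  exact ((h i x).pow 2).mul ((h j x).pow 2)

lemma minimizer_nonneg {k : ℕ} (w : X → X → ℝ) (hnn : ∀ x y, 0 ≤ w x y)
    (hconn : ∀ x y : X, Relation.ReflTransGen (fun a b => 0 < w a b) x y)
    (Γ : Set X) (hΓ : Γ.Nonempty) (φ : Fin k → X → ℝ)
    (hφ01 : ∀ i, ∀ x ∈ Γ, φ i x = 0 ∨ φ i x = 1)
    (ε : ℝ) (hε : 0 < ε) (U : Fin k → X → ℝ)
    (hUb : ∀ i, ∀ x ∈ Γ, U i x = φ i x)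
    (hUmin : ∀ v : Fin k → X → ℝ, (∀ i, ∀ x ∈ Γ, v i x = φ i x) →
      Jpen w ε U ≤ Jpen w ε v) :
    ∀ i x, 0 ≤ U i x := by
  classical
  intro i x
  by_contra hneg
  push_neg at hneg
  set V : Fin k → X → ℝ := fun j y => max (U j y) 0 with hV
  have hVb : ∀ j, ∀ y ∈ Γ, V j y = φ j y := by
    intro j y hy
    have h01 := hφ01 j y hy
    simp only [hV, hUb j y hy]
    rcases h01 with h | h <;> rw [h] <;> norm_num
  have hEle : ∀ j ∈ (univ : Finset (Fin k)), dEnergy w (V j) ≤ dEnergy w (U j) := by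
    intro j _
    unfold dEnergy
    apply mul_le_mul_of_nonneg_left _ (by norm_num)
    apply Finset.sum_le_sum; intro a _
    apply Finset.sum_le_sum; intro b _
    exact mul_le_mul_of_nonneg_left (sq_posPart_sub_le _ _) (hnn _ _)
  have hPle : penTerm V ≤ penTerm U := by
    apply Finset.sum_le_sum; intro a _
    apply Finset.sum_le_sum; intro b _
    apply Finset.sum_le_sum; intro y _
    exact mul_le_mul (sq_posPart_le _) (sq_posPart_le _) (sq_nonneg _) (sq_nonneg _)
  have hJle := hUmin V hVb
  have hc : (0:ℝ) < 1 / ε := by positivity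
  have hPle' : (1 / ε) * penTerm V ≤ (1 / ε) * penTerm U :=
    mul_le_mul_of_nonneg_left hPle hc.le
  have hEsum : ∑ j, dEnergy w (V j) ≤ ∑ j, dEnergy w (U j) := Finset.sum_le_sum hEle
  have hEeq : ∑ j, dEnergy w (V j) = ∑ j, dEnergy w (U j) := by
    rw [Jpen_eq, Jpen_eq] at hJle; linarith
  have hEeq' := (Finset.sum_eq_sum_iff_of_le hEle).mp hEeq
  have hi := hEeq' i (mem_univ i)
  unfold dEnergy at hi
  have hsum2 : ∑ a, ∑ b, w a b * (V i a - V i b) ^ 2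
      = ∑ a, ∑ b, w a b * (U i a - U i b) ^ 2 := by linarith
  have hle2 : ∀ a ∈ (univ : Finset X), (∑ b, w a b * (V i a - V i b) ^ 2)
      ≤ ∑ b, w a b * (U i a - U i b) ^ 2 :=
    fun a _ => Finset.sum_le_sum fun b _ =>
      mul_le_mul_of_nonneg_left (sq_posPart_sub_le _ _) (hnn _ _)
  have heq2 := (Finset.sum_eq_sum_iff_of_le hle2).mp hsum2
  have hedge : ∀ a b : X, w a b * (V i a - V i b) ^ 2 = w a b * (U i a - U i b) ^ 2 := by
    intro a b
    have h3 := heq2 a (mem_univ a)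
    have hle3 : ∀ b ∈ (univ : Finset X), w a b * (V i a - V i b) ^ 2
        ≤ w a b * (U i a - U i b) ^ 2 :=
      fun b _ => mul_le_mul_of_nonneg_left (sq_posPart_sub_le _ _) (hnn _ _)
    exact (Finset.sum_eq_sum_iff_of_le hle3).mp h3 b (mem_univ b)
  have key : ∀ a b : X, 0 < w a b → U i a < 0 → U i b = U i a := by
    intro a b hw ha
    have h4 := hedge a b
    have h5 : (V i a - V i b) ^ 2 = (U i a - U i b) ^ 2 :=
      mul_left_cancel₀ (ne_of_gt hw) h4
    have hVa : V i a = 0 := max_eq_right ha.le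
    rcases le_or_gt (U i b) 0 with hb | hb
    · have hVb2 : V i b = 0 := max_eq_right hb
      rw [hVa, hVb2] at h5
      have h6 : (U i a - U i b) ^ 2 = 0 := by rw [← h5]; ring
      have h7 : U i a - U i b = 0 := by
        exact pow_eq_zero_iff (two_ne_zero) |>.mp h6
      linarith
    · exfalso
      have hVb2 : V i b = U i b := max_eq_left hb.le
      rw [hVa, hVb2] at h5
      nlinarith [mul_pos (neg_pos.mpr ha) hb, sq_nonneg (U i a)]
  obtain ⟨z, hz⟩ := hΓ
  have hprop : ∀ y, Relation.ReflTransGen (fun a b => 0 < w a b) x y → U i y = U i x := by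
    intro y hy
    induction hy with
    | refl => rfl
    | tail hxb hbc ih => exact (key _ _ hbc (by rw [ih]; exact hneg)).trans ih
  have hzx := hprop z (hconn x z)
  have hφz : 0 ≤ φ i z := by rcases hφ01 i z hz with h | h <;> rw [h] <;> norm_num
  rw [hUb i z hz] at hzx
  linarith

end Aux

theorem stmt_11 {X : Type*} [Fintype X] (w : X → X → ℝ)
    (hsym : ∀ x y, w x y = w y x) (hnn : ∀ x y, 0 ≤ w x y)
    (hconn : ∀ x y : X, Relation.ReflTransGen (fun a b => 0 < w a b) x y)
    (k : ℕ) (Γ : Set X) (hΓ : Γ.Nonempty) (φ : Fin k → X → ℝ)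
    (hφ01 : ∀ i, ∀ x ∈ Γ, φ i x = 0 ∨ φ i x = 1)
    (hφseg : ∀ i j, i ≠ j → ∀ x ∈ Γ, φ i x * φ j x = 0)
    (uε : ℝ → Fin k → X → ℝ)
    (hmin : ∀ ε : ℝ, 0 < ε →
      (∀ i, ∀ x ∈ Γ, uε ε i x = φ i x) ∧
      ∀ v : Fin k → X → ℝ, (∀ i, ∀ x ∈ Γ, v i x = φ i x) →
        Jpen w ε (uε ε) ≤ Jpen w ε v)
    (εs : ℕ → ℝ) (hεpos : ∀ n, 0 < εs n)
    (hεlim : Filter.Tendsto εs Filter.atTop (nhds 0)) :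
    ∃ τ : ℕ → ℕ, StrictMono τ ∧ ∃ u : Fin k → X → ℝ,
      Adm Γ φ u ∧
      (∀ v : Fin k → X → ℝ, Adm Γ φ v →
        ∑ i, dEnergy w (u i) ≤ ∑ i, dEnergy w (v i)) ∧
      ∀ (i : Fin k) (x : X),
        Filter.Tendsto (fun n => uε (εs (τ n)) i x) Filter.atTop (nhds (u i x)) := by
  classical
  obtain ⟨x₀, hx₀⟩ := hΓ
  -- comparison function
  set v₀ : Fin k → X → ℝ := fun i x => if x ∈ Γ then φ i x else 0 with hv₀
  have hv₀b : ∀ i, ∀ x ∈ Γ, v₀ i x = φ i x := by intro i x hx; simp [hv₀, hx]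
  have hv₀seg : ∀ i j, i ≠ j → ∀ x, v₀ i x * v₀ j x = 0 := by
    intro i j hij x
    by_cases hx : x ∈ Γ
    · simp only [hv₀, if_pos hx]; exact hφseg i j hij x hx
    · simp [hv₀, hx]
  set C : ℝ := ∑ i, dEnergy w (v₀ i) with hC
  have hC0 : 0 ≤ C := Finset.sum_nonneg fun i _ => dEnergy_nonneg w hnn _
  have hJv₀ : ∀ ε : ℝ, Jpen w ε v₀ = C := by
    intro ε; rw [Jpen_eq, penTerm_eq_zero_of_seg _ hv₀seg]; ring
  have hEb : ∀ ε : ℝ, 0 < ε → ∑ i, dEnergy w (uε ε i) ≤ C := by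
    intro ε hε
    have h1 := (hmin ε hε).2 v₀ hv₀b
    rw [hJv₀, Jpen_eq] at h1
    have h2 : 0 ≤ (1 / ε) * penTerm (uε ε) :=
      mul_nonneg (by positivity) (penTerm_nonneg _)
    linarith
  have hPb : ∀ ε : ℝ, 0 < ε → penTerm (uε ε) ≤ ε * C := by
    intro ε hε
    have h1 := (hmin ε hε).2 v₀ hv₀b
    rw [hJv₀, Jpen_eq] at h1
    have h2 : 0 ≤ ∑ i, dEnergy w (uε ε i) :=
      Finset.sum_nonneg fun i _ => dEnergy_nonneg w hnn _
    have h3 : (1 / ε) * penTerm (uε ε) ≤ C := by linarith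
    calc penTerm (uε ε) = ε * ((1 / ε) * penTerm (uε ε)) := by field_simp
    _ ≤ ε * C := mul_le_mul_of_nonneg_left h3 hε.le
  have hUnn : ∀ ε : ℝ, 0 < ε → ∀ i x, 0 ≤ uε ε i x := fun ε hε =>
    minimizer_nonneg w hnn hconn Γ ⟨x₀, hx₀⟩ φ hφ01 ε hε (uε ε) (hmin ε hε).1 (hmin ε hε).2
  -- uniform bound
  set F : Finset (X × X) := univ.filter (fun p => 0 < w p.1 p.2) with hF
  set δ : ℝ := if h : F.Nonempty then F.inf' h (fun p => w p.1 p.2) else 1 with hδ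
  have hδpos : 0 < δ := by
    rw [hδ]; split_ifs with h
    · rw [Finset.lt_inf'_iff]; intro p hp; exact (Finset.mem_filter.mp hp).2
    · norm_num
  have hδle : ∀ a b : X, 0 < w a b → δ ≤ w a b := by
    intro a b hab
    have hm : (a, b) ∈ F := Finset.mem_filter.mpr ⟨mem_univ _, hab⟩
    rw [hδ, dif_pos ⟨_, hm⟩]
    exact Finset.inf'_le _ hm
  set K : ℝ := Real.sqrt (2 * C / δ) with hK
  have hedgeK : ∀ ε : ℝ, 0 < ε → ∀ i, ∀ a b : X, 0 < w a b →
      |uε ε i a - uε ε i b| ≤ K := by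
    intro ε hε i a b hab
    have h1 : w a b * (uε ε i a - uε ε i b) ^ 2 ≤ 2 * C := by
      have he := edge_le w hnn (uε ε i) a b
      have h2 : dEnergy w (uε ε i) ≤ C := by
        have h3 : ∀ j ∈ (univ : Finset (Fin k)), 0 ≤ dEnergy w (uε ε j) :=
          fun j _ => dEnergy_nonneg w hnn _
        calc dEnergy w (uε ε i) ≤ ∑ j, dEnergy w (uε ε j) :=
              Finset.single_le_sum h3 (mem_univ i)
        _ ≤ C := hEb ε hε
      linarith
    have h4 : (uε ε i a - uε ε i b) ^ 2 ≤ 2 * C / δ := by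
      rw [le_div_iff₀ hδpos]
      calc (uε ε i a - uε ε i b) ^ 2 * δ ≤ (uε ε i a - uε ε i b) ^ 2 * w a b :=
        mul_le_mul_of_nonneg_left (hδle a b hab) (sq_nonneg _)
      _ = w a b * (uε ε i a - uε ε i b) ^ 2 := mul_comm _ _
      _ ≤ 2 * C := h1
    calc |uε ε i a - uε ε i b| = Real.sqrt ((uε ε i a - uε ε i b) ^ 2) :=
      (Real.sqrt_sq_eq_abs _).symm
    _ ≤ K := Real.sqrt_le_sqrt h4
  -- chains from x₀
  have hchain : ∀ y : X, ∃ l : List X, List.Chain (fun a b => 0 < w a b) x₀ l ∧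
      (x₀ :: l).getLast (List.cons_ne_nil _ _) = y := fun y =>
    List.exists_isChain_cons_of_relationReflTransGen (hconn x₀ y)
  choose L hL1 hL2 using hchain
  set B : X → ℝ := fun y => 1 + K * (L y).length with hB
  have hbound : ∀ ε : ℝ, 0 < ε → ∀ i y, |uε ε i y| ≤ B y := by
    intro ε hε i y
    have h1 : |uε ε i x₀ - uε ε i y| ≤ K * (L y).length := by
      have hcb := chain_abs_bound (fun a b => 0 < w a b) (uε ε i) K
        (fun p q h => hedgeK ε hε i p q h) (L y) x₀ (hL1 y)
      rwa [hL2 y] at hcb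
    have h2 : |uε ε i x₀| ≤ 1 := by
      rw [(hmin ε hε).1 i x₀ hx₀]
      rcases hφ01 i x₀ hx₀ with h | h <;> rw [h] <;> norm_num
    have h3 : |uε ε i y| - |uε ε i x₀| ≤ |uε ε i y - uε ε i x₀| :=
      abs_sub_abs_le_abs_sub _ _
    rw [abs_sub_comm] at h3
    simp only [hB]
    linarith
  -- compactness
  set SS : Set (Fin k → X → ℝ) :=
    Set.univ.pi (fun _ => Set.univ.pi fun y => Set.Icc (-(B y)) (B y)) with hSS
  have hcomp : IsCompact SS :=
    isCompact_univ_pi fun _ => isCompact_univ_pi fun _ => isCompact_Icc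
  have hmem : ∀ n, uε (εs n) ∈ SS := by
    intro n
    rw [hSS, Set.mem_univ_pi]
    intro i
    rw [Set.mem_univ_pi]
    intro y
    exact Set.mem_Icc.mpr (abs_le.mp (hbound (εs n) (hεpos n) i y))
  obtain ⟨u, huS, τ, hτ, hconv⟩ := hcomp.tendsto_subseq hmem
  have hpt : ∀ i y, Filter.Tendsto (fun n => uε (εs (τ n)) i y) Filter.atTop
      (nhds (u i y)) := by
    intro i y
    have h1 := (tendsto_pi_nhds.mp hconv) i
    have h2 := (tendsto_pi_nhds.mp h1) y
    simpa [Function.comp] using h2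
  refine ⟨τ, hτ, u, ⟨?_, ?_, ?_⟩, ?_, fun i x => hpt i x⟩
  · -- boundary values
    intro i x hx
    have heq : (fun n => uε (εs (τ n)) i x) = fun _ => φ i x :=
      funext fun n => (hmin _ (hεpos _)).1 i x hx
    exact tendsto_nhds_unique (heq ▸ hpt i x) tendsto_const_nhds
  · -- nonnegativity
    intro i x
    exact ge_of_tendsto' (hpt i x) (fun n => hUnn _ (hεpos _) i x)
  · -- segregation
    have hPt := tendsto_penTerm (fun n => uε (εs (τ n))) u hpt
    have hεt : Filter.Tendsto (fun n => εs (τ n) * C) Filter.atTop (nhds 0) := by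
      have h1 := (hεlim.comp hτ.tendsto_atTop).mul_const C
      simpa using h1
    have hP0 : penTerm u ≤ 0 :=
      le_of_tendsto_of_tendsto' hPt hεt (fun n => hPb _ (hεpos _))
    have hPeq : penTerm u = 0 := le_antisymm hP0 (penTerm_nonneg u)
    intro i j hij x
    have h1 := (Finset.sum_eq_zero_iff_of_nonneg (fun a _ =>
      Finset.sum_nonneg fun b _ => Finset.sum_nonneg fun y _ =>
        mul_nonneg (sq_nonneg _) (sq_nonneg _))).mp hPeq i (mem_univ i)
    have h2 := (Finset.sum_eq_zero_iff_of_nonneg (fun b _ =>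
      Finset.sum_nonneg fun y _ => mul_nonneg (sq_nonneg _) (sq_nonneg _))).mp h1 j
      (Finset.mem_erase.mpr ⟨hij.symm, mem_univ j⟩)
    have h3 := (Finset.sum_eq_zero_iff_of_nonneg (fun y _ =>
      mul_nonneg (sq_nonneg _) (sq_nonneg _))).mp h2 x (mem_univ x)
    have h4 : (u i x * u j x) ^ 2 = 0 := by rw [mul_pow]; exact h3
    exact pow_eq_zero_iff two_ne_zero |>.mp h4
  · -- minimality
    intro v hv
    have hPv : penTerm v = 0 := penTerm_eq_zero_of_seg v hv.2.2
    have hle : ∀ n, ∑ i, dEnergy w (uε (εs (τ n)) i) ≤ ∑ i, dEnergy w (v i) := by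
      intro n
      have h1 := (hmin _ (hεpos (τ n))).2 v hv.1
      rw [Jpen_eq, Jpen_eq, hPv] at h1
      have h2 : 0 ≤ (1 / εs (τ n)) * penTerm (uε (εs (τ n))) :=
        mul_nonneg (one_div_nonneg.mpr (hεpos _).le) (penTerm_nonneg _)
      linarith
    have hEt := tendsto_dEnergySum w (fun n => uε (εs (τ n))) u hpt
    exact le_of_tendsto hEt (Filter.Eventually.of_forall hle)
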